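/- Let k be a field of characteristic p > 2 and let μ₁,…,μ_s ∈ k be linearly independent over 𝔽_p. Let (Z/p)^s act on k[X,Y] with the i-th generator g_i acting by g_i(Y)=Y, g_i(X)=X-μ_iY. Then the ring of invariants k[X,Y]^{(Z/p)^s} equals k[φ,Y], where φ = ∏_{(a₁,…,a_s)∈𝔽_p^s} (X + (a₁μ₁+⋯+a_sμ_s)Y). -/

import Mathlib

section Frozen
open MvPolynomial

/-- The `k`-algebra automorphism of `k[X,Y]` determined by `X ↦ X - cY`, `Y ↦ Y`
(we write `X = X 0`, `Y = X 1`). -/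
noncomputable def substAct (k : Type*) [CommRing k] (c : k) :
    MvPolynomial (Fin 2) k →ₐ[k] MvPolynomial (Fin 2) k :=
  aeval (fun j => if j = 0 then X 0 - C c * X 1 else X 1)

end Frozen

section Aux
open Polynomial

open Polynomial

section OneVar

variable {R : Type*} [CommRing R] [IsDomain R] {G : Type*} [AddCommGroup G] [Fintype G]

/-- invariance composes -/
lemma inv_add {f : R[X]} {r r' : R}
    (h : f.comp (X + C r) = f) (h' : f.comp (X + C r') = f) :
    f.comp (X + C (r + r')) = f := by
  have : (X + C (r + r') : R[X]) = (X + C r).comp (X + C r') := by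
    simp [add_comp]; ring
  rw [this, ← comp_assoc, h, h']

lemma inv_nsmul {f : R[X]} {r : R} (h : f.comp (X + C r) = f) :
    ∀ n : ℕ, f.comp (X + C (n • r)) = f := by
  intro n
  induction n with
  | zero => simp
  | succ n ih =>
    rw [succ_nsmul]
    exact inv_add ih h

/-- The "Psi" polynomial is invariant under shifting by any `m b`. -/
lemma psi_comp (m : G →+ R) (b : G) :
    (∏ a : G, (X + C (m a))).comp (X + C (m b)) = ∏ a : G, (X + C (m a)) := by
  rw [prod_comp]
  have : ∀ a : G, (X + C (m a)).comp (X + C (m b)) = X + C (m (a + b)) := by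
    intro a
    simp [add_comp, map_add]; ring
  simp_rw [this]
  exact Equiv.prod_comp (Equiv.addRight b) (fun a => X + C (m a))

end OneVar

section OneVar2
variable {R : Type*} [CommRing R] [IsDomain R] {G : Type*} [AddCommGroup G] [Fintype G]

omit [IsDomain R] in
lemma degree_taylor' (c : R) (r : R[X]) : (taylor c r).degree = r.degree := by
  rcases eq_or_ne r 0 with rfl | hr
  · simp
  · have hne : taylor c r ≠ 0 := by
      intro h
      have := taylor_taylor r (-c) c
      rw [h] at this
      simp at this
      exact hr this.symm
    rw [degree_eq_natDegree hr, degree_eq_natDegree hne, natDegree_taylor]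

lemma invar_mem_adjoin (m : G →+ R) (hm : Function.Injective m)
    (f : R[X]) (hf : ∀ a : G, f.comp (X + C (m a)) = f) :
    f ∈ Algebra.adjoin R {∏ a : G, (X + C (m a))} := by
  set Ψ := ∏ a : G, (X + C (m a)) with hΨdef
  have hmonic : Ψ.Monic := monic_prod_of_monic _ _ (fun a _ => monic_X_add_C (m a))
  have hdegΨ : Ψ.natDegree = Fintype.card G := by
    rw [hΨdef, natDegree_prod]
    · simp
    · intro a _; exact (monic_X_add_C (m a)).ne_zero
  have hcard : 0 < Fintype.card G := Fintype.card_pos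
  generalize hn : f.natDegree = n
  induction n using Nat.strong_induction_on generalizing f with
  | _ n ih =>
  by_cases h0 : f.natDegree = 0
  · obtain ⟨a, rfl⟩ := natDegree_eq_zero.mp h0
    rw [← Polynomial.algebraMap_eq]
    exact Subalgebra.algebraMap_mem _ a
  set q := f /ₘ Ψ with hq
  set r := f %ₘ Ψ with hr
  have hfe : r + Ψ * q = f := modByMonic_add_div f Ψ
  have hdegr : r.degree < Ψ.degree := degree_modByMonic_lt f hmonic
  have hinv : ∀ a : G, q.comp (X + C (m a)) = q ∧ r.comp (X + C (m a)) = r := by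
    intro a
    have h1 : r.comp (X + C (m a)) + Ψ * q.comp (X + C (m a)) = f := by
      conv_rhs => rw [← hf a, ← hfe]
      rw [add_comp, mul_comp, psi_comp]
    have h2 : (r.comp (X + C (m a))).degree < Ψ.degree := by
      rw [← taylor_apply, degree_taylor']
      exact hdegr
    have := div_modByMonic_unique (q.comp (X + C (m a))) (r.comp (X + C (m a))) hmonic ⟨h1, h2⟩
    exact ⟨this.1.symm, this.2.symm⟩
  have hrdeg : r.natDegree < Fintype.card G := by
    rcases eq_or_ne r 0 with h | h
    · simpa [h] using hcard
    · rw [← hdegΨ]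
      exact natDegree_lt_natDegree h hdegr
  have hrconst : r = C (r.eval 0) := by
    have hroots : ∀ a : G, (r - C (r.eval 0)).eval (m a) = 0 := by
      intro a
      have h := congrArg (Polynomial.eval (0 : R)) ((hinv a).2)
      rw [eval_comp] at h
      simp only [eval_add, eval_X, eval_C, zero_add] at h
      simp [h]
    have hd : (r - C (r.eval 0)).natDegree < Fintype.card G :=
      lt_of_le_of_lt (le_trans (natDegree_sub_le _ _) (by simp [hrdeg.le, Nat.max_le])) hrdeg
    have hz := eq_zero_of_natDegree_lt_card_of_eval_eq_zero _ hm hroots hd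
    have := sub_eq_zero.mp hz
    exact this
  have hqdeg : q.natDegree < f.natDegree := by
    rw [hq, natDegree_divByMonic f hmonic, hdegΨ]
    exact Nat.sub_lt (Nat.pos_of_ne_zero h0) hcard
  have hqmem : q ∈ Algebra.adjoin R {Ψ} := by
    exact ih q.natDegree (hn ▸ hqdeg) q (fun a => (hinv a).1) rfl
  have : f = C (r.eval 0) + Ψ * q := by conv_lhs => rw [← hfe, hrconst]
  rw [this, ← Polynomial.algebraMap_eq]
  exact Subalgebra.add_mem _ (Subalgebra.algebraMap_mem _ _)
    (Subalgebra.mul_mem _ (Algebra.subset_adjoin rfl) hqmem)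
end OneVar2

lemma key_oneVar {R : Type*} [CommRing R] [IsDomain R] {p s : ℕ} [NeZero p]
    (m : (Fin s → ZMod p) →+ R) (hm : Function.Injective m) (f : R[X])
    (hf : ∀ i : Fin s, f.comp (X + C (m (Pi.single i 1))) = f) :
    f ∈ Algebra.adjoin R {∏ a : Fin s → ZMod p, (X + C (m a))} := by
  apply invar_mem_adjoin m hm
  intro a
  have ha : a = ∑ i : Fin s, (a i).val • (Pi.single i (1 : ZMod p) : Fin s → ZMod p) := by
    have : ∀ i : Fin s, (a i).val • (Pi.single i (1 : ZMod p) : Fin s → ZMod p)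
        = Pi.single i (a i) := by
      intro i
      ext j
      rcases eq_or_ne j i with rfl | hji
      · simp [ZMod.natCast_val, ZMod.cast_id]
      · simp [Pi.single_eq_of_ne hji]
    simp_rw [this]
    exact (Finset.univ_sum_single a).symm
  have hma : m a = ∑ i : Fin s, (a i).val • m (Pi.single i (1 : ZMod p)) := by
    conv_lhs => rw [ha]
    rw [map_sum]
    exact Finset.sum_congr rfl fun i _ => map_nsmul m _ _
  rw [hma]
  refine Finset.sum_induction _ (fun r => f.comp (X + C r) = f) (fun x y hx hy => inv_add hx hy)
    (by simp) ?_
  intro i _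
  exact inv_nsmul (hf i) _

noncomputable def substAct' (k : Type*) [CommRing k] (c : k) :
    MvPolynomial (Fin 2) k →ₐ[k] MvPolynomial (Fin 2) k :=
  MvPolynomial.aeval (fun j => if j = 0 then MvPolynomial.X 0 - MvPolynomial.C c * MvPolynomial.X 1 else MvPolynomial.X 1)

section Glue
variable (k : Type*) [CommRing k]

/-- `k[X₀,X₁] ≃ k[Y][X]` sending `X₀ ↦ X`, `X₁ ↦ C Y`. -/
noncomputable def toPoly :
    MvPolynomial (Fin 2) k ≃ₐ[k] Polynomial (Polynomial k) :=
  (MvPolynomial.finSuccEquiv k 1).trans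
    (Polynomial.mapAlgEquiv ((MvPolynomial.finSuccEquiv k 0).trans
      (Polynomial.mapAlgEquiv (MvPolynomial.isEmptyAlgEquiv k (Fin 0)))))

@[simp] lemma toPoly_X0 : toPoly k (MvPolynomial.X 0) = Polynomial.X := by
  simp [toPoly, MvPolynomial.finSuccEquiv_X_zero]

@[simp] lemma toPoly_X1 : toPoly k (MvPolynomial.X 1) = Polynomial.C Polynomial.X := by
  have h1 : (MvPolynomial.finSuccEquiv k 1) (MvPolynomial.X 1)
      = Polynomial.C (MvPolynomial.X 0) := MvPolynomial.finSuccEquiv_X_succ (j := 0)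
  rw [toPoly]
  simp [h1, MvPolynomial.finSuccEquiv_X_zero, Polynomial.map_C]

@[simp] lemma toPoly_C (a : k) :
    toPoly k (MvPolynomial.C a) = Polynomial.C (Polynomial.C a) := by
  have := (toPoly k).commutes a
  simpa [MvPolynomial.algebraMap_eq, Polynomial.algebraMap_apply] using this

/-- shift action on `k[Y][X]` : `X ↦ X - cY·X`…, i.e. `X ↦ X - C(C c * Y)`. -/
noncomputable def shiftAct (c : k) :
    Polynomial (Polynomial k) →ₐ[k] Polynomial (Polynomial k) :=
  (Polynomial.aeval (Polynomial.X - Polynomial.C (Polynomial.C c * Polynomial.X))).restrictScalars k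

@[simp] lemma shiftAct_X (c : k) :
    shiftAct k c Polynomial.X
      = Polynomial.X - Polynomial.C (Polynomial.C c * Polynomial.X) := by
  simp [shiftAct]

@[simp] lemma shiftAct_C (c : k) (g : Polynomial k) :
    shiftAct k c (Polynomial.C g) = Polynomial.C g := by
  have := (Polynomial.aeval
    (Polynomial.X - Polynomial.C (Polynomial.C c * Polynomial.X))).commutes g
  simpa [shiftAct, Polynomial.algebraMap_eq] using this

lemma shiftAct_eq_comp (c : k) (f : Polynomial (Polynomial k)) :
    shiftAct k c f
      = f.comp (Polynomial.X - Polynomial.C (Polynomial.C c * Polynomial.X)) := by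
  simp [shiftAct, Polynomial.aeval_def, Polynomial.comp, Polynomial.algebraMap_eq]

lemma toPoly_substAct (c : k) (f : MvPolynomial (Fin 2) k) :
    toPoly k (substAct' k c f) = shiftAct k c (toPoly k f) := by
  have h : ((toPoly k).toAlgHom.comp (substAct' k c))
      = (shiftAct k c).comp ((toPoly k).toAlgHom) := by
    apply MvPolynomial.algHom_ext
    intro j
    fin_cases j
    · simp [substAct', map_sub, map_mul]
    · simp [substAct']
  exact DFunLike.congr_fun h f

end Glue

section Main
open Polynomial

variable {p : ℕ} (k : Type*) [CommRing k] {s : ℕ}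

/-- the linear character `a ↦ ∑ aᵢ μᵢ`. -/
noncomputable def lamSum [CharP k p] (μ : Fin s → k) (a : Fin s → ZMod p) : k :=
  ∑ i, ZMod.castHom (dvd_refl p) k (a i) * μ i

variable [CharP k p] (μ : Fin s → k)

lemma lamSum_add (a b : Fin s → ZMod p) :
    lamSum k μ (a + b) = lamSum k μ a + lamSum k μ b := by
  rw [lamSum, lamSum, lamSum, ← Finset.sum_add_distrib]
  exact Finset.sum_congr rfl fun i _ => by rw [Pi.add_apply, map_add, add_mul]

lemma lamSum_neg (a : Fin s → ZMod p) : lamSum k μ (-a) = - lamSum k μ a := by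
  rw [lamSum, lamSum, ← Finset.sum_neg_distrib]
  exact Finset.sum_congr rfl fun i _ => by rw [Pi.neg_apply, map_neg, neg_mul]

lemma lamSum_sub (a b : Fin s → ZMod p) :
    lamSum k μ (a - b) = lamSum k μ a - lamSum k μ b := by
  rw [sub_eq_add_neg, lamSum_add, lamSum_neg, sub_eq_add_neg]

lemma lamSum_single [NeZero p] (i : Fin s) :
    lamSum k μ (Pi.single i (1 : ZMod p) : Fin s → ZMod p) = μ i := by
  rw [lamSum]
  refine (Finset.sum_eq_single i ?_ ?_).trans (by simp)
  · intro j _ hj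
    simp [Pi.single_eq_of_ne hj]
  · simp

lemma C_mem_pair (u : Polynomial (Polynomial k)) (g : Polynomial k) :
    Polynomial.C g ∈ Algebra.adjoin k {u, (Polynomial.C Polynomial.X :
      Polynomial (Polynomial k))} := by
  have hg : g ∈ Algebra.adjoin k ({X} : Set (Polynomial k)) := by
    rw [Polynomial.adjoin_X]; trivial
  induction hg using Algebra.adjoin_induction with
  | mem x hx =>
    rw [Set.mem_singleton_iff] at hx; subst hx
    exact Algebra.subset_adjoin (Set.mem_insert_of_mem _ rfl)
  | algebraMap r =>
    have h : (Polynomial.C (algebraMap k (Polynomial k) r) :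
        Polynomial (Polynomial k)) = algebraMap k _ r := by
      simp [Polynomial.algebraMap_apply]
    rw [h]
    exact Subalgebra.algebraMap_mem _ r
  | add x y _ _ hx hy => rw [map_add]; exact add_mem hx hy
  | mul x y _ _ hx hy => rw [map_mul]; exact mul_mem hx hy

end Main

section Thm
open Polynomial

theorem invariants_Zps' (p : ℕ) [Fact p.Prime] (hp : Odd p)
    (k : Type*) [Field k] [CharP k p] (s : ℕ) (μ : Fin s → k)
    (hμ : ∀ c : Fin s → ZMod p,
      ∑ i, ZMod.castHom (dvd_refl p) k (c i) * μ i = 0 → c = 0) :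
    (⨅ i : Fin s, AlgHom.equalizer (substAct' k (μ i))
        (AlgHom.id k (MvPolynomial (Fin 2) k))) =
      Algebra.adjoin k
        {∏ a : Fin s → ZMod p,
            (MvPolynomial.X 0 + MvPolynomial.C
              (∑ i, ZMod.castHom (dvd_refl p) k (a i) * μ i) * MvPolynomial.X 1),
         (MvPolynomial.X 1 : MvPolynomial (Fin 2) k)} := by
  classical
  have hμ' : ∀ c : Fin s → ZMod p, lamSum k μ c = 0 → c = 0 := hμ
  -- restate the goal using `lamSum`
  show _ = Algebra.adjoin k
      {∏ a : Fin s → ZMod p,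
          (MvPolynomial.X 0 + MvPolynomial.C (lamSum k μ a) * MvPolynomial.X 1),
       (MvPolynomial.X 1 : MvPolynomial (Fin 2) k)}
  set φ : MvPolynomial (Fin 2) k :=
    ∏ a : Fin s → ZMod p,
      (MvPolynomial.X 0 + MvPolynomial.C (lamSum k μ a) * MvPolynomial.X 1) with hφ
  have lam_inj : Function.Injective (lamSum (p := p) k μ) := by
    intro a b h
    have h2 : lamSum k μ (a - b) = 0 := by rw [lamSum_sub, h, sub_self]
    have := hμ' (a - b) h2
    rwa [sub_eq_zero] at this
  apply le_antisymm
  · -- invariants ⊆ adjoin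
    intro f hf
    rw [Algebra.mem_iInf] at hf
    have hfi : ∀ i, substAct' k (μ i) f = f := by
      intro i
      have := (AlgHom.mem_equalizer _ _ _).mp (hf i)
      simpa using this
    set Φ : Polynomial (Polynomial k) :=
      ∏ a : Fin s → ZMod p, (X + C (C (lamSum k μ a) * X)) with hΦ
    let m : (Fin s → ZMod p) →+ Polynomial k :=
      { toFun := fun a => C (- lamSum k μ a) * X
        map_zero' := by simp [lamSum]
        map_add' := fun a b => by
          show C (- lamSum k μ (a + b)) * X
              = C (- lamSum k μ a) * X + C (- lamSum k μ b) * X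
          rw [lamSum_add, neg_add, C_add, add_mul] }
    have hm : Function.Injective m := by
      intro a b h
      apply lam_inj
      have h2 := congrArg (fun q => Polynomial.coeff q 1) h
      simp only [m, AddMonoidHom.coe_mk, ZeroHom.coe_mk, coeff_C_mul, coeff_X_one,
        mul_one] at h2
      exact neg_injective h2
    have hgen : ∀ i : Fin s,
        (toPoly k f).comp (X + C (m (Pi.single i 1))) = toPoly k f := by
      intro i
      have h1 : shiftAct k (μ i) (toPoly k f) = toPoly k f := by
        rw [← toPoly_substAct, hfi]
      rw [shiftAct_eq_comp] at h1
      have h2 : (X + C (m (Pi.single i 1)) : Polynomial (Polynomial k))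
          = X - C (C (μ i) * X) := by
        show (X + C (C (- lamSum k μ (Pi.single i 1)) * X) : Polynomial (Polynomial k)) = _
        rw [lamSum_single, map_neg, neg_mul, map_neg, sub_eq_add_neg]
      rw [h2]
      exact h1
    have hmem := key_oneVar m hm (toPoly k f) hgen
    have hprod : (∏ a : Fin s → ZMod p, (X + C (m a))) = Φ := by
      rw [hΦ, ← Equiv.prod_comp (Equiv.neg (Fin s → ZMod p))
        (fun a => X + C (C (lamSum k μ a) * X))]
      refine Finset.prod_congr rfl fun a _ => ?_
      show (X + C (C (- lamSum k μ a) * X) : Polynomial (Polynomial k))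
          = X + C (C (lamSum k μ (-a)) * X)
      rw [lamSum_neg]
    rw [hprod] at hmem
    have hstep' : ∀ F : Polynomial (Polynomial k),
        F ∈ Algebra.adjoin (Polynomial k) {Φ} →
        F ∈ Algebra.adjoin k {Φ, (C X : Polynomial (Polynomial k))} := by
      intro F hF
      induction hF using Algebra.adjoin_induction with
      | mem x hx =>
        rw [Set.mem_singleton_iff] at hx; subst hx
        exact Algebra.subset_adjoin (Set.mem_insert _ _)
      | algebraMap g => exact C_mem_pair k Φ g
      | add x y _ _ hx hy => exact add_mem hx hy
      | mul x y _ _ hx hy => exact mul_mem hx hy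
    have hstep := hstep' _ hmem
    have htoφ : toPoly k φ = Φ := by
      rw [hφ, hΦ, map_prod]
      refine Finset.prod_congr rfl fun a _ => ?_
      rw [map_add, map_mul, toPoly_X0, toPoly_X1, toPoly_C, ← Polynomial.C_mul]
    have himg : (toPoly k) '' {φ, MvPolynomial.X 1}
        = {Φ, (C X : Polynomial (Polynomial k))} := by
      rw [Set.image_pair, htoφ, toPoly_X1]
    have hadj : Algebra.adjoin k ({Φ, (C X : Polynomial (Polynomial k))} : Set _)
        = (Algebra.adjoin k {φ, MvPolynomial.X 1}).map (toPoly k).toAlgHom := by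
      rw [← himg]
      have hco : ⇑(toPoly k) '' {φ, MvPolynomial.X 1}
          = ⇑((toPoly k).toAlgHom) '' {φ, MvPolynomial.X 1} := rfl
      rw [hco, Algebra.adjoin_image]
    rw [hadj] at hstep
    obtain ⟨y, hy, hyf⟩ := Subalgebra.mem_map.mp hstep
    have hyf' : y = f := (toPoly k).injective (by simpa using hyf)
    exact hyf' ▸ hy
  · -- adjoin ⊆ invariants
    apply Algebra.adjoin_le
    intro x hx
    rw [SetLike.mem_coe, Algebra.mem_iInf]
    intro i
    rw [AlgHom.mem_equalizer]
    rw [Set.mem_insert_iff, Set.mem_singleton_iff] at hx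
    rcases hx with rfl | rfl
    · -- φ is invariant
      have hsub : ∀ a : Fin s → ZMod p,
          substAct' k (μ i) (MvPolynomial.X 0
            + MvPolynomial.C (lamSum k μ a) * MvPolynomial.X 1)
          = MvPolynomial.X 0 + MvPolynomial.C
              (lamSum k μ (a - Pi.single i 1)) * MvPolynomial.X 1 := by
        intro a
        rw [lamSum_sub, lamSum_single]
        have : substAct' k (μ i) (MvPolynomial.X 0
            + MvPolynomial.C (lamSum k μ a) * MvPolynomial.X 1)
            = (MvPolynomial.X 0 - MvPolynomial.C (μ i) * MvPolynomial.X 1)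
              + MvPolynomial.C (lamSum k μ a) * MvPolynomial.X 1 := by
          simp [substAct']
        rw [this, map_sub]
        ring
      rw [hφ, map_prod]
      simp_rw [hsub]
      rw [← Equiv.prod_comp (Equiv.subRight (Pi.single i (1 : ZMod p) : Fin s → ZMod p))
        (fun a => MvPolynomial.X 0
          + MvPolynomial.C (lamSum k μ a) * MvPolynomial.X 1)]
      simp [AlgHom.id_apply]
    · simp [substAct']

end Thm

end Aux


open MvPolynomial


/-- Let `k` be a field of characteristic `p > 2` and `μ₁, …, μ_s ∈ k` be
linearly independent over `𝔽_p`.  Let `(ℤ/p)^s` act on `k[X,Y]` with the `i`-th generator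
acting by `Y ↦ Y`, `X ↦ X - μᵢY`.  Then the ring of invariants is `k[φ, Y]`, where
`φ = ∏_{(a₁,…,a_s) ∈ 𝔽_p^s} (X + (a₁μ₁ + ⋯ + a_sμ_s)Y)`. -/
theorem invariants_Zps (p : ℕ) [Fact p.Prime] (hp : Odd p)
    (k : Type*) [Field k] [CharP k p] (s : ℕ) (μ : Fin s → k)
    (hμ : ∀ c : Fin s → ZMod p,
      ∑ i, ZMod.castHom (dvd_refl p) k (c i) * μ i = 0 → c = 0) :
    (⨅ i : Fin s, AlgHom.equalizer (substAct k (μ i))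
        (AlgHom.id k (MvPolynomial (Fin 2) k))) =
      Algebra.adjoin k
        {∏ a : Fin s → ZMod p,
            (X 0 + C (∑ i, ZMod.castHom (dvd_refl p) k (a i) * μ i) * X 1),
         (X 1 : MvPolynomial (Fin 2) k)} := by
  exact invariants_Zps' p hp k s μ hμ
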